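/- Fix I ≥ 2. For Lebesgue-almost every Z ∈ ℝ^{I×I×2} the following holds: suppose rank(Z) = I+1 and (Q_a, Q_b, R₁, R₂) is an optimal solution of the GSD problem for Z with R = I, with R₁ and R₂ nonsingular. Let d ≥ 2 and 1 ≤ h ≤ I−d+1, and let W_k (k = 1,2) be the d×d submatrix of Q_aᵀ·Z_k·Q_b consisting of rows h,…,h+d−1 and columns h,…,h+d−1. If there exists λ ≠ 0 such that the upper triangular part (diagonal included) of W₂ − λ·W₁ is zero, then both W₁ and W₂ are upper triangular. -/

import Mathlib

open Matrix MeasureTheory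
open scoped BigOperators

/-- The tensor rank of a real `I × J × K` array: the smallest `R` such that the array
is a sum of `R` rank-1 (outer product) arrays. -/
noncomputable def tensorRank {I J K : ℕ} (Y : Fin I → Fin J → Fin K → ℝ) : ℕ :=
  sInf {R : ℕ | ∃ (a : Fin R → Fin I → ℝ) (b : Fin R → Fin J → ℝ) (c : Fin R → Fin K → ℝ),
    ∀ i j k, Y i j k = ∑ r, a r i * b r j * c r k}

/-- The `k`-th frontal slice of an `I × J × 2` array, as a matrix. -/
def sliceMat {I J : ℕ} (Z : Fin I → Fin J → Fin 2 → ℝ) (k : Fin 2) :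
    Matrix (Fin I) (Fin J) ℝ :=
  Matrix.of fun i j => Z i j k

/-- The GSD objective function: `∑ₖ ‖Z_k - Qa R_k Qbᵀ‖²_F`. -/
noncomputable def gsdObj {I J R : ℕ} (Z : Fin I → Fin J → Fin 2 → ℝ)
    (Qa : Matrix (Fin I) (Fin R) ℝ) (Qb : Matrix (Fin J) (Fin R) ℝ)
    (R1 R2 : Matrix (Fin R) (Fin R) ℝ) : ℝ :=
  ∑ k : Fin 2, ∑ i, ∑ j, (Z i j k - (Qa * (![R1, R2] k) * Qbᵀ) i j) ^ 2

namespace Stmt13Aux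

open scoped RealInnerProductSpace

variable {n : ℕ}

/-- sum of squares of strictly lower-triangular entries -/
noncomputable def slq (M : Matrix (Fin n) (Fin n) ℝ) : ℝ :=
  ∑ i : Fin n, ∑ j : Fin n, if (j : ℕ) < (i : ℕ) then M i j ^ 2 else 0

/-- Frobenius square norm -/
noncomputable def frob (M : Matrix (Fin n) (Fin n) ℝ) : ℝ :=
  ∑ i : Fin n, ∑ j : Fin n, M i j ^ 2

/-- upper part (including diagonal) -/
def upPart (M : Matrix (Fin n) (Fin n) ℝ) : Matrix (Fin n) (Fin n) ℝ :=
  Matrix.of fun i j => if (j : ℕ) < (i : ℕ) then 0 else M i j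

lemma upPart_blockTriangular (M : Matrix (Fin n) (Fin n) ℝ) :
    (upPart M).BlockTriangular id := by
  intro i j hij
  have hij' : (j : ℕ) < (i : ℕ) := hij
  simp only [upPart, Matrix.of_apply, if_pos hij']

lemma slq_nonneg (M : Matrix (Fin n) (Fin n) ℝ) : 0 ≤ slq M := by
  unfold slq
  apply Finset.sum_nonneg; intro i _
  apply Finset.sum_nonneg; intro j _
  split <;> positivity

lemma slq_le_frob (M : Matrix (Fin n) (Fin n) ℝ) : slq M ≤ frob M := by
  unfold slq frob
  apply Finset.sum_le_sum; intro i _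
  apply Finset.sum_le_sum; intro j _
  split
  · exact le_rfl
  · positivity

lemma frob_eq_trace (M : Matrix (Fin n) (Fin n) ℝ) : frob M = (Mᵀ * M).trace := by
  rw [Matrix.trace, frob, Finset.sum_comm]
  congr 1; ext j
  simp [Matrix.diag, Matrix.mul_apply, sq]

lemma frob_orth_left_right {Q M P : Matrix (Fin n) (Fin n) ℝ}
    (hQ : Qᵀ * Q = 1) (hP : P * Pᵀ = 1) : frob (Q * M * P) = frob M := by
  rw [frob_eq_trace, frob_eq_trace]
  have h1 : (Q * M * P)ᵀ * (Q * M * P) = Pᵀ * (Mᵀ * M) * P := by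
    have : (Q * M * P)ᵀ = Pᵀ * (Mᵀ * Qᵀ) := by
      simp [Matrix.transpose_mul, Matrix.mul_assoc]
    rw [this]
    calc Pᵀ * (Mᵀ * Qᵀ) * (Q * M * P) = Pᵀ * (Mᵀ * ((Qᵀ * Q) * M)) * P := by
          simp only [Matrix.mul_assoc]
      _ = Pᵀ * (Mᵀ * M) * P := by rw [hQ, Matrix.one_mul]
  rw [h1, Matrix.trace_mul_cycle, ← Matrix.mul_assoc, hP, Matrix.one_mul]



/-- dot product of two `Fin d → ℝ` vectors -/
noncomputable def dp (v w : Fin d → ℝ) : ℝ := ∑ i, v i * w i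

lemma euclidean_inner (x y : EuclideanSpace ℝ (Fin d)) : ⟪x, y⟫ = ∑ i, x i * y i := by
  simp [PiLp.inner_apply, RCLike.inner_apply, conj_trivial]
  exact Finset.sum_congr rfl (fun _ _ => mul_comm _ _)

/-- given a partial family of rows that is orthonormal on `s`, extend to an orthogonal matrix -/
lemma exists_orth_rows (f : Fin d → (Fin d → ℝ)) (s : Finset (Fin d))
    (h : ∀ i ∈ s, ∀ j ∈ s, dp (f i) (f j) = if i = j then 1 else 0) :
    ∃ V : Matrix (Fin d) (Fin d) ℝ, Vᵀ * V = 1 ∧ V * Vᵀ = 1 ∧ ∀ i ∈ s, V i = f i := by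
  classical
  set E := EuclideanSpace ℝ (Fin d)
  have card : Module.finrank ℝ E = Fintype.card (Fin d) := by
    simp [E, finrank_euclideanSpace_fin]
  set g : Fin d → E := fun i => WithLp.toLp 2 (f i : Fin d → ℝ)
  have horth : Orthonormal ℝ ((↑s : Set (Fin d)).domRestrict g) := by
    rw [orthonormal_iff_ite]
    rintro ⟨i, hi⟩ ⟨j, hj⟩
    rw [Set.domRestrict_apply, Set.domRestrict_apply, euclidean_inner]
    have := h i (by simpa using hi) j (by simpa using hj)
    rw [show (∑ k, g i k * g j k) = dp (f i) (f j) from rfl, this]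
    by_cases hij : i = j
    · subst hij; simp
    · rw [if_neg hij, if_neg (by simpa [Subtype.ext_iff] using hij)]
  obtain ⟨b, hb⟩ := horth.exists_orthonormalBasis_extension_of_card_eq card
  refine ⟨Matrix.of (fun i k => b i k), ?_, ?_, ?_⟩
  · rw [mul_eq_one_comm]
    ext i j
    have := orthonormal_iff_ite.mp b.orthonormal i j
    rw [euclidean_inner] at this
    simp only [Matrix.mul_apply, Matrix.transpose_apply, Matrix.of_apply, Matrix.one_apply]
    exact this
  · ext i j
    have := orthonormal_iff_ite.mp b.orthonormal i j
    rw [euclidean_inner] at this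
    simp only [Matrix.mul_apply, Matrix.transpose_apply, Matrix.of_apply, Matrix.one_apply]
    exact this
  · intro i hi
    funext k
    have := hb i (by simpa using hi)
    simp only [Matrix.of_apply]
    rw [this]

/-- QR: for any square real matrix `A` there is an orthogonal `U` with `U * A` upper triangular -/
lemma exists_qr (A : Matrix (Fin d) (Fin d) ℝ) :
    ∃ U : Matrix (Fin d) (Fin d) ℝ, Uᵀ * U = 1 ∧ U * Uᵀ = 1 ∧
      ∀ i j : Fin d, (j : ℕ) < (i : ℕ) → (U * A) i j = 0 := by
  classical
  set E := EuclideanSpace ℝ (Fin d)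
  have card : Module.finrank ℝ E = Fintype.card (Fin d) := by
    simp [E, finrank_euclideanSpace_fin]
  set g : Fin d → E := fun j => WithLp.toLp 2 ((fun i => A i j) : Fin d → ℝ)
  haveI : WellFoundedLT (Fin d) := inferInstance
  set b := InnerProductSpace.gramSchmidtOrthonormalBasis (𝕜 := ℝ) (E := E) card g
  refine ⟨Matrix.of (fun i k => b i k), ?_, ?_, ?_⟩
  · rw [mul_eq_one_comm]
    ext i j
    have := orthonormal_iff_ite.mp b.orthonormal i j
    rw [euclidean_inner] at this
    simp only [Matrix.mul_apply, Matrix.transpose_apply, Matrix.of_apply, Matrix.one_apply]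
    exact this
  · ext i j
    have := orthonormal_iff_ite.mp b.orthonormal i j
    rw [euclidean_inner] at this
    simp only [Matrix.mul_apply, Matrix.transpose_apply, Matrix.of_apply, Matrix.one_apply]
    exact this
  · intro i j hij
    have hlt : j < i := by exact_mod_cast hij
    have := InnerProductSpace.gramSchmidtOrthonormalBasis_inv_triangular card g hlt
    rw [euclidean_inner] at this
    simpa [Matrix.mul_apply, Matrix.of_apply, g] using this


/-! ### vector invariance and helper lemmas -/

lemma sumsq_mulVec {d : ℕ} {V : Matrix (Fin d) (Fin d) ℝ} (h : Vᵀ * V = 1) (w : Fin d → ℝ) :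
    ∑ i, (∑ k, V i k * w k) ^ 2 = ∑ i, (w i) ^ 2 := by
  have hVV : ∀ a b, (∑ i, V i a * V i b) = if a = b then (1 : ℝ) else 0 := by
    intro a b
    have h2 : (Vᵀ * V) a b = (1 : Matrix (Fin d) (Fin d) ℝ) a b := by rw [h]
    simpa [Matrix.mul_apply, Matrix.transpose_apply, Matrix.one_apply] using h2
  calc ∑ i, (∑ k, V i k * w k) ^ 2
      = ∑ i, ∑ a, ∑ b, (V i a * w a) * (V i b * w b) := by
        refine Finset.sum_congr rfl (fun i _ => ?_)
        rw [sq, Finset.sum_mul_sum]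
    _ = ∑ a, ∑ b, (w a * w b) * (∑ i, V i a * V i b) := by
        rw [Finset.sum_comm]
        refine Finset.sum_congr rfl (fun a _ => ?_)
        rw [Finset.sum_comm]
        refine Finset.sum_congr rfl (fun b _ => ?_)
        rw [Finset.mul_sum]
        exact Finset.sum_congr rfl (fun i _ => by ring)
    _ = ∑ a, (w a) ^ 2 := by
        refine Finset.sum_congr rfl (fun a _ => ?_)
        simp only [hVV, mul_ite, mul_one, mul_zero]
        simp [sq]

lemma dp_comm {d : ℕ} (v w : Fin d → ℝ) : dp v w = dp w v := by
  unfold dp; exact Finset.sum_congr rfl (fun i _ => mul_comm _ _)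

lemma dp_self_pos {d : ℕ} {v : Fin d → ℝ} (h : v ≠ 0) : 0 < dp v v := by
  obtain ⟨i, hi⟩ := Function.ne_iff.mp h
  unfold dp
  apply Finset.sum_pos' (fun j _ => mul_self_nonneg _)
  exact ⟨i, Finset.mem_univ i, mul_self_pos.mpr hi⟩

lemma dp_smul_left {d : ℕ} (a : ℝ) (v w : Fin d → ℝ) : dp (a • v) w = a * dp v w := by
  unfold dp; rw [Finset.mul_sum]
  exact Finset.sum_congr rfl (fun i _ => by simp [Pi.smul_apply, smul_eq_mul]; ring)

lemma dp_sub_left {d : ℕ} (u v w : Fin d → ℝ) : dp (u - v) w = dp u w - dp v w := by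
  unfold dp; rw [← Finset.sum_sub_distrib]
  exact Finset.sum_congr rfl (fun i _ => by simp [Pi.sub_apply]; ring)

/-- `usq`: sum of squares of entries on or above the diagonal -/
noncomputable def usq {n : ℕ} (M : Matrix (Fin n) (Fin n) ℝ) : ℝ :=
  ∑ i : Fin n, ∑ j : Fin n, if (j : ℕ) < (i : ℕ) then 0 else M i j ^ 2

lemma usq_nonneg {n : ℕ} (M : Matrix (Fin n) (Fin n) ℝ) : 0 ≤ usq M := by
  unfold usq
  apply Finset.sum_nonneg; intro i _
  apply Finset.sum_nonneg; intro j _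
  split <;> positivity

lemma frob_eq_slq_add_usq {n : ℕ} (M : Matrix (Fin n) (Fin n) ℝ) :
    frob M = slq M + usq M := by
  unfold frob slq usq
  rw [← Finset.sum_add_distrib]
  refine Finset.sum_congr rfl (fun i _ => ?_)
  rw [← Finset.sum_add_distrib]
  refine Finset.sum_congr rfl (fun j _ => ?_)
  split <;> ring

lemma slq_eq_zero_entries {n : ℕ} {M : Matrix (Fin n) (Fin n) ℝ} (h : slq M = 0) :
    ∀ i j : Fin n, (j : ℕ) < (i : ℕ) → M i j = 0 := by
  intro i j hij
  have h1 : ∀ i ∈ (Finset.univ : Finset (Fin n)),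
      (0:ℝ) ≤ ∑ j : Fin n, if (j : ℕ) < (i : ℕ) then M i j ^ 2 else 0 := by
    intro i _
    apply Finset.sum_nonneg; intro j _; split <;> positivity
  have h2 := (Finset.sum_eq_zero_iff_of_nonneg h1).mp h i (Finset.mem_univ i)
  have h3 : ∀ j ∈ (Finset.univ : Finset (Fin n)),
      (0:ℝ) ≤ if (j : ℕ) < (i : ℕ) then M i j ^ 2 else 0 := by
    intro j _; split <;> positivity
  have h4 := (Finset.sum_eq_zero_iff_of_nonneg h3).mp h2 j (Finset.mem_univ j)
  rw [if_pos hij] at h4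
  exact pow_eq_zero_iff two_ne_zero |>.mp h4

lemma usq_eq_zero_entries {n : ℕ} {M : Matrix (Fin n) (Fin n) ℝ} (h : usq M = 0) :
    ∀ i j : Fin n, ¬ ((j : ℕ) < (i : ℕ)) → M i j = 0 := by
  intro i j hij
  have h1 : ∀ i ∈ (Finset.univ : Finset (Fin n)),
      (0:ℝ) ≤ ∑ j : Fin n, if (j : ℕ) < (i : ℕ) then 0 else M i j ^ 2 := by
    intro i _
    apply Finset.sum_nonneg; intro j _; split <;> positivity
  have h2 := (Finset.sum_eq_zero_iff_of_nonneg h1).mp h i (Finset.mem_univ i)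
  have h3 : ∀ j ∈ (Finset.univ : Finset (Fin n)),
      (0:ℝ) ≤ if (j : ℕ) < (i : ℕ) then 0 else M i j ^ 2 := by
    intro j _; split <;> positivity
  have h4 := (Finset.sum_eq_zero_iff_of_nonneg h3).mp h2 j (Finset.mem_univ j)
  rw [if_neg hij] at h4
  exact pow_eq_zero_iff two_ne_zero |>.mp h4

lemma frob_of_strictLower {n : ℕ} {N : Matrix (Fin n) (Fin n) ℝ}
    (hN : ∀ p q : Fin n, ¬ ((q : ℕ) < (p : ℕ)) → N p q = 0) : frob N = slq N := by
  unfold frob slq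
  refine Finset.sum_congr rfl (fun i _ => Finset.sum_congr rfl (fun j _ => ?_))
  by_cases hij : (j : ℕ) < (i : ℕ)
  · rw [if_pos hij]
  · rw [if_neg hij, hN i j hij]; ring


lemma slq_zero_of_entries {n : ℕ} (M : Matrix (Fin n) (Fin n) ℝ)
    (h : ∀ i j : Fin n, (j : ℕ) < (i : ℕ) → M i j = 0) : slq M = 0 := by
  unfold slq
  apply Finset.sum_eq_zero; intro i _
  apply Finset.sum_eq_zero; intro j _
  by_cases hij : (j : ℕ) < (i : ℕ)
  · rw [if_pos hij, h i j hij]; ring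
  · rw [if_neg hij]

lemma dp_add_left {d : ℕ} (u v w : Fin d → ℝ) : dp (u + v) w = dp u w + dp v w := by
  unfold dp; rw [← Finset.sum_add_distrib]
  exact Finset.sum_congr rfl (fun i _ => by simp [Pi.add_apply]; ring)

lemma dp_zero_left {d : ℕ} (w : Fin d → ℝ) : dp 0 w = 0 := by
  unfold dp; apply Finset.sum_eq_zero; intro i _; simp

lemma dp_zero_right {d : ℕ} (w : Fin d → ℝ) : dp w 0 = 0 := by
  rw [dp_comm]; exact dp_zero_left w

lemma dp_smul_right {d : ℕ} (a : ℝ) (v w : Fin d → ℝ) : dp v (a • w) = a * dp v w := by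
  rw [dp_comm, dp_smul_left, dp_comm]

/-! ### the core rigidity lemma -/

lemma core {d : ℕ} (hd : 2 ≤ d) (T N : Matrix (Fin d) (Fin d) ℝ)
    (hdiag : ∀ p, T p p ≠ 0)
    (hN : ∀ p q : Fin d, ¬ ((q : ℕ) < (p : ℕ)) → N p q = 0)
    (hopt : ∀ U V : Matrix (Fin d) (Fin d) ℝ, Uᵀ * U = 1 → U * Uᵀ = 1 → Vᵀ * V = 1 → V * Vᵀ = 1 →
      slq T + slq N ≤ slq (U * T * Vᵀ) + slq (U * N * Vᵀ)) :
    T.BlockTriangular id ∧ N = 0 := by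
  have hd0 : 0 < d := by omega
  have hd1 : 1 < d := by omega
  set z : Fin d := ⟨0, hd0⟩ with hz
  set o : Fin d := ⟨1, hd1⟩ with ho
  have frobN : frob N = slq N := frob_of_strictLower hN
  -- (a) T is upper triangular
  have hTslq : slq T = 0 := by
    obtain ⟨U, hU1, hU2, hUtri⟩ := exists_qr T
    have h := hopt U 1 hU1 hU2 (by simp) (by simp)
    rw [Matrix.transpose_one, Matrix.mul_one, Matrix.mul_one] at h
    have e1 : slq (U * T) = 0 := slq_zero_of_entries _ hUtri
    have e2 : slq (U * N) ≤ slq N := by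
      calc slq (U * N) ≤ frob (U * N) := slq_le_frob _
        _ = frob N := by
            have := frob_orth_left_right (M := N) hU1
              (P := (1 : Matrix (Fin d) (Fin d) ℝ)) (by simp)
            simpa using this
        _ = slq N := frobN
    nlinarith [slq_nonneg T]
  have hT : T.BlockTriangular id := fun i j hij => slq_eq_zero_entries hTslq i j hij
  -- (b) the key vanishing property
  have key : ∀ V : Matrix (Fin d) (Fin d) ℝ, Vᵀ * V = 1 → V * Vᵀ = 1 →
      ∀ q : Fin d, dp (T.mulVec (V z)) (N.mulVec (V q)) = 0 := by
    intro V hV1 hV2 q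
    obtain ⟨U, hU1, hU2, hUtri⟩ := exists_qr (T * Vᵀ)
    have hTV0 : slq (U * T * Vᵀ) = 0 := by
      rw [Matrix.mul_assoc]
      exact slq_zero_of_entries _ hUtri
    have h := hopt U V hU1 hU2 hV1 hV2
    rw [hTslq, hTV0] at h
    have hfrob : frob (U * N * Vᵀ) = slq N := by
      rw [frob_orth_left_right hU1 (by rw [Matrix.transpose_transpose]; exact hV1), frobN]
    have husq : usq (U * N * Vᵀ) = 0 := by
      have h5 := frob_eq_slq_add_usq (U * N * Vᵀ)
      have h6 := usq_nonneg (U * N * Vᵀ)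
      nlinarith
    have hup : ∀ i j : Fin d, ¬ ((j : ℕ) < (i : ℕ)) → (U * N * Vᵀ) i j = 0 :=
      usq_eq_zero_entries husq
    have hTv : T.mulVec (V z) = fun i => (T * Vᵀ) i z := by
      funext i
      simp [Matrix.mulVec, Matrix.mul_apply, dotProduct, Matrix.transpose_apply]
    have hNv : N.mulVec (V q) = fun i => (N * Vᵀ) i q := by
      funext i
      simp [Matrix.mulVec, Matrix.mul_apply, dotProduct, Matrix.transpose_apply]
    have hrec : T * Vᵀ = Uᵀ * (U * (T * Vᵀ)) := by
      rw [← Matrix.mul_assoc, hU1, Matrix.one_mul]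
    have hcol : ∀ i, (T * Vᵀ) i z = U z i * (U * (T * Vᵀ)) z z := by
      intro i
      conv_lhs => rw [hrec]
      rw [Matrix.mul_apply]
      rw [Finset.sum_eq_single z]
      · rw [Matrix.transpose_apply]
      · intro k _ hk
        have hk0 : (z : ℕ) < (k : ℕ) := by
          have : (k : ℕ) ≠ 0 := fun hc => hk (by rw [hz]; exact Fin.ext hc)
          simp [hz]; omega
        rw [hUtri k z hk0, mul_zero]
      · intro hc; exact absurd (Finset.mem_univ z) hc
    calc dp (T.mulVec (V z)) (N.mulVec (V q))
        = ∑ i, (U z i * (U * (T * Vᵀ)) z z) * (N * Vᵀ) i q := by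
          rw [hTv, hNv]; unfold dp
          exact Finset.sum_congr rfl (fun i _ => by dsimp only; rw [hcol i])
      _ = (U * (T * Vᵀ)) z z * ∑ i, U z i * (N * Vᵀ) i q := by
          rw [Finset.mul_sum]
          exact Finset.sum_congr rfl (fun i _ => by ring)
      _ = (U * (T * Vᵀ)) z z * (U * N * Vᵀ) z q := by
          congr 1
          rw [Matrix.mul_assoc, Matrix.mul_apply]
      _ = 0 := by
          rw [hup z q (by simp [hz]), mul_zero]
  -- (c) unit-vector versions
  have u1 : ∀ v : Fin d → ℝ, dp v v = 1 → dp (T.mulVec v) (N.mulVec v) = 0 := by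
    intro v hv
    obtain ⟨V, hV1, hV2, hVs⟩ := exists_orth_rows (fun _ => v) {z} (by
      intro i hi j hj
      rw [Finset.mem_singleton] at hi hj
      subst hi; subst hj
      rw [if_pos rfl]; exact hv)
    have hVz : V z = v := hVs z (Finset.mem_singleton_self z)
    have := key V hV1 hV2 z
    rwa [hVz] at this
  have u2 : ∀ v w : Fin d → ℝ, dp v v = 1 → dp w w = 1 → dp v w = 0 →
      dp (T.mulVec v) (N.mulVec w) = 0 := by
    intro v w hv hw hvw
    have hzo : z ≠ o := by
      rw [hz, ho]; intro hc
      have := congrArg Fin.val hc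
      simp at this
    have hwv : dp w v = 0 := by rw [dp_comm]; exact hvw
    obtain ⟨V, hV1, hV2, hVs⟩ := exists_orth_rows (fun i => if i = z then v else w) {z, o} (by
      intro i hi j hj
      rw [Finset.mem_insert, Finset.mem_singleton] at hi hj
      rcases hi with hi | hi <;> rcases hj with hj | hj <;> subst hi <;> subst hj <;>
        simp [hzo, Ne.symm hzo, hv, hw, hvw, hwv])
    have hVz : V z = v := by
      have := hVs z (Finset.mem_insert_self z {o})
      rwa [if_pos rfl] at this
    have hVo : V o = w := by
      have := hVs o (Finset.mem_insert_of_mem (Finset.mem_singleton_self o))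
      rwa [if_neg hzo.symm] at this
    have := key V hV1 hV2 o
    rwa [hVz, hVo] at this
  -- (d) bilinear extension
  have u3 : ∀ (x u : Fin d → ℝ), dp u u = 1 → dp (T.mulVec x) (N.mulVec u) = 0 := by
    intro x u hu
    set a : ℝ := dp x u with ha
    set zv : Fin d → ℝ := x - a • u with hzv
    have hx : x = zv + a • u := by rw [hzv]; abel
    have hzu : dp zv u = 0 := by
      rw [hzv, dp_sub_left, dp_smul_left, hu, mul_one, ha, sub_self]
    have hsplit : dp (T.mulVec x) (N.mulVec u)
        = dp (T.mulVec zv) (N.mulVec u) + a * dp (T.mulVec u) (N.mulVec u) := by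
      rw [hx, Matrix.mulVec_add, Matrix.mulVec_smul, dp_add_left, dp_smul_left]
    rw [hsplit, u1 u hu, mul_zero, add_zero]
    by_cases hz0 : zv = 0
    · rw [hz0, Matrix.mulVec_zero, dp_zero_left]
    · set nz : ℝ := Real.sqrt (dp zv zv) with hnz
      have hpos : 0 < dp zv zv := dp_self_pos hz0
      have hnzpos : 0 < nz := Real.sqrt_pos.mpr hpos
      set zh : Fin d → ℝ := nz⁻¹ • zv with hzh
      have hzv' : zv = nz • zh := by
        rw [hzh, smul_smul, mul_inv_cancel₀ (ne_of_gt hnzpos), one_smul]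
      have hzh1 : dp zh zh = 1 := by
        rw [hzh, dp_smul_left, dp_smul_right]
        rw [show nz⁻¹ * (nz⁻¹ * dp zv zv) = (dp zv zv) / (nz * nz) by field_simp]
        rw [hnz, Real.mul_self_sqrt hpos.le, div_self (ne_of_gt hpos)]
      have hzhu : dp zh u = 0 := by
        rw [hzh, dp_smul_left, hzu, mul_zero]
      rw [hzv', Matrix.mulVec_smul, dp_smul_left, u2 zh u hzh1 hu hzhu, mul_zero]
  have keyF : ∀ x y : Fin d → ℝ, dp (T.mulVec x) (N.mulVec y) = 0 := by
    intro x y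
    by_cases hy0 : y = 0
    · rw [hy0, Matrix.mulVec_zero, dp_zero_right]
    · set ny : ℝ := Real.sqrt (dp y y) with hny
      have hpos : 0 < dp y y := dp_self_pos hy0
      have hnypos : 0 < ny := Real.sqrt_pos.mpr hpos
      set yh : Fin d → ℝ := ny⁻¹ • y with hyh
      have hy' : y = ny • yh := by
        rw [hyh, smul_smul, mul_inv_cancel₀ (ne_of_gt hnypos), one_smul]
      have hyh1 : dp yh yh = 1 := by
        rw [hyh, dp_smul_left, dp_smul_right]
        rw [show ny⁻¹ * (ny⁻¹ * dp y y) = (dp y y) / (ny * ny) by field_simp]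
        rw [hny, Real.mul_self_sqrt hpos.le, div_self (ne_of_gt hpos)]
      rw [hy', Matrix.mulVec_smul, dp_smul_right, u3 x yh hyh1, mul_zero]
  -- (e) conclude
  have hTN : Tᵀ * N = 0 := by
    ext a b
    have h := keyF (Pi.single a 1) (Pi.single b 1)
    have e1 : T.mulVec (Pi.single a 1) = fun i => T i a := by
      funext i
      rw [Matrix.mulVec_single]
      simp
    have e2 : N.mulVec (Pi.single b 1) = fun i => N i b := by
      funext i
      rw [Matrix.mulVec_single]
      simp
    rw [e1, e2] at h
    unfold dp at h
    simp only [Matrix.mul_apply, Matrix.transpose_apply, Matrix.zero_apply]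
    exact h
  have hdet : IsUnit (Tᵀ).det := by
    rw [Matrix.det_transpose, Matrix.det_of_upperTriangular hT]
    exact isUnit_iff_ne_zero.mpr (Finset.prod_ne_zero_iff.mpr (fun i _ => hdiag i))
  refine ⟨hT, ?_⟩
  calc N = ((Tᵀ)⁻¹ * Tᵀ) * N := by rw [Matrix.nonsing_inv_mul _ hdet, Matrix.one_mul]
    _ = (Tᵀ)⁻¹ * (Tᵀ * N) := by rw [Matrix.mul_assoc]
    _ = 0 := by rw [hTN, Matrix.mul_zero]


/-! ### embedding a d×d block at offset m inside I×I -/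

section Embedding

variable {I d m : ℕ}

/-- the band predicate -/
def inBand (m d : ℕ) (i : Fin I) : Prop := m ≤ (i : ℕ) ∧ (i : ℕ) < m + d

instance : ∀ i : Fin I, Decidable (inBand m d i) := fun i => instDecidableAnd

/-- embedding of indices -/
def emb (hmd : m + d ≤ I) : Fin d → Fin I := fun p => ⟨m + (p : ℕ), by omega⟩

lemma emb_inBand (hmd : m + d ≤ I) (p : Fin d) : inBand m d (emb hmd p) := by
  constructor <;> simp [emb] <;> omega

lemma emb_val (hmd : m + d ≤ I) (p : Fin d) : ((emb hmd p : Fin I) : ℕ) = m + (p : ℕ) := by simp [emb]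

/-- embedding of a small matrix as a block-diagonal big matrix -/
def embed (hmd : m + d ≤ I) (U : Matrix (Fin d) (Fin d) ℝ) : Matrix (Fin I) (Fin I) ℝ :=
  Matrix.of fun i j =>
    if hij : inBand m d i ∧ inBand m d j then
      U ⟨(i : ℕ) - m, by have := hij.1.1; have := hij.1.2; omega⟩
        ⟨(j : ℕ) - m, by have := hij.2.1; have := hij.2.2; omega⟩
    else (if i = j then 1 else 0)

lemma embed_out_row (hmd : m + d ≤ I) (U : Matrix (Fin d) (Fin d) ℝ) {i : Fin I}
    (hi : ¬ inBand m d i) (k : Fin I) :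
    embed hmd U i k = if i = k then 1 else 0 := by
  unfold embed
  rw [Matrix.of_apply, dif_neg (fun hc => hi hc.1)]

lemma embed_in_row (hmd : m + d ≤ I) (U : Matrix (Fin d) (Fin d) ℝ) {i : Fin I}
    (hi : inBand m d i) (k : Fin I) :
    embed hmd U i k = if hk : inBand m d k then
      U ⟨(i : ℕ) - m, by have := hi.1; have := hi.2; omega⟩
        ⟨(k : ℕ) - m, by have := hk.1; have := hk.2; omega⟩ else 0 := by
  unfold embed
  rw [Matrix.of_apply]
  by_cases hk : inBand m d k
  · rw [dif_pos ⟨hi, hk⟩, dif_pos hk]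
  · rw [dif_neg (fun hc => hk hc.2), dif_neg hk, if_neg]
    intro hc; subst hc; exact hk hi

lemma emb_val_sub (hmd : m + d ≤ I) (p : Fin d) :
    (⟨((emb hmd p : Fin I) : ℕ) - m, by have := (emb_inBand hmd p).1; have := (emb_inBand hmd p).2; omega⟩ : Fin d) = p := by
  apply Fin.ext
  simp [emb]

/-- summing over the band -/
lemma sum_band (hmd : m + d ≤ I) (f : Fin I → ℝ) :
    ∑ i ∈ Finset.univ.filter (fun i : Fin I => inBand m d i), f i
      = ∑ p : Fin d, f (emb hmd p) := by
  refine Finset.sum_bij' (i := fun (i : Fin I) (hi : i ∈ Finset.univ.filter (fun i : Fin I => inBand m d i)) =>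
      (⟨(i : ℕ) - m, by
        have h := (Finset.mem_filter.mp hi).2
        have := h.1; have := h.2; omega⟩ : Fin d))
    (j := fun p _ => emb hmd p) ?_ ?_ ?_ ?_ ?_
  · intro a ha; exact Finset.mem_univ _
  · intro p _
    exact Finset.mem_filter.mpr ⟨Finset.mem_univ _, emb_inBand hmd p⟩
  · intro a ha
    obtain ⟨h1, h2⟩ := (Finset.mem_filter.mp ha).2
    apply Fin.ext
    simp [emb]
    omega
  · intro p _
    apply Fin.ext
    simp [emb]
  · intro a ha
    obtain ⟨h1, h2⟩ := (Finset.mem_filter.mp ha).2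
    congr 1
    apply Fin.ext
    simp [emb]
    omega

lemma sum_split (hmd : m + d ≤ I) (f : Fin I → ℝ) :
    ∑ i : Fin I, f i = (∑ p : Fin d, f (emb hmd p))
      + ∑ i ∈ Finset.univ.filter (fun i : Fin I => ¬ inBand m d i), f i := by
  rw [← sum_band hmd f]
  exact (Finset.sum_filter_add_sum_filter_not Finset.univ _ f).symm

end Embedding


section Embedding2

variable {I d m : ℕ}

lemma embed_emb (hmd : m + d ≤ I) (U : Matrix (Fin d) (Fin d) ℝ) (p q : Fin d) :
    embed hmd U (emb hmd p) (emb hmd q) = U p q := by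
  unfold embed
  rw [Matrix.of_apply, dif_pos ⟨emb_inBand hmd p, emb_inBand hmd q⟩]
  simp [emb, Nat.add_sub_cancel_left]

lemma embed_orth (hmd : m + d ≤ I) {U : Matrix (Fin d) (Fin d) ℝ} (hU : U * Uᵀ = 1) :
    embed hmd U * (embed hmd U)ᵀ = 1 := by
  ext i j
  rw [Matrix.mul_apply]
  simp only [Matrix.transpose_apply]
  by_cases hi : inBand m d i <;> by_cases hj : inBand m d j
  · -- both in band
    rw [sum_split hmd (f := fun k => embed hmd U i k * embed hmd U j k)]
    have hz : ∀ k ∈ Finset.univ.filter (fun k : Fin I => ¬ inBand m d k),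
        embed hmd U i k * embed hmd U j k = 0 := by
      intro k hk
      have hkb := (Finset.mem_filter.mp hk).2
      rw [embed_in_row hmd U hi k, dif_neg hkb, zero_mul]
    rw [Finset.sum_eq_zero hz, add_zero]
    have hsum : ∀ p : Fin d, embed hmd U i (emb hmd p) * embed hmd U j (emb hmd p)
        = U ⟨(i:ℕ) - m, by have := hi.1; have := hi.2; omega⟩ p
          * U ⟨(j:ℕ) - m, by have := hj.1; have := hj.2; omega⟩ p := by
      intro p
      rw [embed_in_row hmd U hi _, embed_in_row hmd U hj _,
        dif_pos (emb_inBand hmd p), dif_pos (emb_inBand hmd p)]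
      congr 2 <;> (apply Fin.ext; simp [emb])
    rw [Finset.sum_congr rfl (fun p _ => hsum p)]
    have hUU : ∀ a b : Fin d, (∑ p : Fin d, U a p * U b p) = if a = b then (1:ℝ) else 0 := by
      intro a b
      have h2 : (U * Uᵀ) a b = (1 : Matrix (Fin d) (Fin d) ℝ) a b := by rw [hU]
      simpa [Matrix.mul_apply, Matrix.transpose_apply, Matrix.one_apply] using h2
    rw [hUU]
    have : ((⟨(i:ℕ) - m, by have := hi.1; have := hi.2; omega⟩ : Fin d)
        = ⟨(j:ℕ) - m, by have := hj.1; have := hj.2; omega⟩) ↔ i = j := by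
      constructor
      · intro hc
        have := congrArg Fin.val hc
        simp only at this
        apply Fin.ext
        have := hi.1; have := hj.1
        omega
      · intro hc; subst hc; rfl
    rw [Matrix.one_apply]
    by_cases hij : i = j
    · rw [if_pos (this.mpr hij), if_pos hij]
    · rw [if_neg (fun hc => hij (this.mp hc)), if_neg hij]
  · -- i in band, j not
    have : ∀ k : Fin I, embed hmd U i k * embed hmd U j k = 0 := by
      intro k
      rw [embed_out_row hmd U hj k]
      by_cases hk : inBand m d k
      · rw [if_neg (show ¬ j = k from fun hc => hj (by rw [hc]; exact hk)), mul_zero]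
      · rw [embed_in_row hmd U hi k, dif_neg hk, zero_mul]
    rw [Finset.sum_eq_zero (fun k _ => this k), Matrix.one_apply,
      if_neg (show ¬ i = j from fun hc => hj (by rw [← hc]; exact hi))]
  · -- j in band, i not
    have : ∀ k : Fin I, embed hmd U i k * embed hmd U j k = 0 := by
      intro k
      rw [embed_out_row hmd U hi k]
      by_cases hk : inBand m d k
      · rw [if_neg (show ¬ i = k from fun hc => hi (by rw [hc]; exact hk)), zero_mul]
      · rw [embed_in_row hmd U hj k, dif_neg hk, mul_zero]
    rw [Finset.sum_eq_zero (fun k _ => this k), Matrix.one_apply,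
      if_neg (show ¬ i = j from fun hc => hi (by rw [hc]; exact hj))]
  · -- neither
    have hterm : ∀ k : Fin I, embed hmd U i k * embed hmd U j k
        = (if i = k then (1:ℝ) else 0) * (if j = k then (1:ℝ) else 0) := by
      intro k
      rw [embed_out_row hmd U hi k, embed_out_row hmd U hj k]
    rw [Finset.sum_congr rfl (fun k _ => hterm k), Matrix.one_apply]
    by_cases hij : i = j
    · subst hij
      rw [if_pos rfl]
      have hsq : ∀ k : Fin I, (if i = k then (1:ℝ) else 0) * (if i = k then (1:ℝ) else 0)
          = if i = k then (1:ℝ) else 0 := by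
        intro k; by_cases h : i = k <;> simp [h]
      rw [Finset.sum_congr rfl (fun k _ => hsq k)]
      simp
    · rw [if_neg hij]
      apply Finset.sum_eq_zero
      intro k _
      by_cases hik : i = k
      · rw [if_neg (show ¬ j = k from fun hc => hij (hik.trans hc.symm)), mul_zero]
      · rw [if_neg hik, zero_mul]

lemma mulT_out (hmd : m + d ≤ I) (V : Matrix (Fin d) (Fin d) ℝ) (A : Matrix (Fin I) (Fin I) ℝ)
    {j : Fin I} (hj : ¬ inBand m d j) (i : Fin I) :
    (A * (embed hmd V)ᵀ) i j = A i j := by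
  rw [Matrix.mul_apply]
  have hterm : ∀ l : Fin I, A i l * (embed hmd V)ᵀ l j = A i l * (if j = l then 1 else 0) := by
    intro l
    rw [Matrix.transpose_apply, embed_out_row hmd V hj l]
  rw [Finset.sum_congr rfl (fun l _ => hterm l)]
  simp

lemma mulT_in (hmd : m + d ≤ I) (V : Matrix (Fin d) (Fin d) ℝ) (A : Matrix (Fin I) (Fin I) ℝ)
    {j : Fin I} (hj : inBand m d j) (i : Fin I) :
    (A * (embed hmd V)ᵀ) i j
      = ∑ q : Fin d, A i (emb hmd q) * V ⟨(j:ℕ) - m, by have := hj.1; have := hj.2; omega⟩ q := by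
  rw [Matrix.mul_apply]
  rw [sum_split hmd (f := fun l => A i l * (embed hmd V)ᵀ l j)]
  have hz : ∀ l ∈ Finset.univ.filter (fun l : Fin I => ¬ inBand m d l),
      A i l * (embed hmd V)ᵀ l j = 0 := by
    intro l hl
    have hlb := (Finset.mem_filter.mp hl).2
    rw [Matrix.transpose_apply, embed_in_row hmd V hj l, dif_neg hlb, mul_zero]
  rw [Finset.sum_eq_zero hz, add_zero]
  refine Finset.sum_congr rfl (fun q _ => ?_)
  rw [Matrix.transpose_apply, embed_in_row hmd V hj (emb hmd q), dif_pos (emb_inBand hmd q)]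
  simp [emb, Nat.add_sub_cancel_left]


lemma mulL_out (hmd : m + d ≤ I) (U : Matrix (Fin d) (Fin d) ℝ) (C : Matrix (Fin I) (Fin I) ℝ)
    {i : Fin I} (hi : ¬ inBand m d i) (j : Fin I) :
    (embed hmd U * C) i j = C i j := by
  rw [Matrix.mul_apply]
  have hterm : ∀ k : Fin I, embed hmd U i k * C k j = (if i = k then 1 else 0) * C k j := by
    intro k; rw [embed_out_row hmd U hi k]
  rw [Finset.sum_congr rfl (fun k _ => hterm k)]
  simp

lemma mulL_in (hmd : m + d ≤ I) (U : Matrix (Fin d) (Fin d) ℝ) (C : Matrix (Fin I) (Fin I) ℝ)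
    {i : Fin I} (hi : inBand m d i) (j : Fin I) :
    (embed hmd U * C) i j
      = ∑ p : Fin d, U ⟨(i:ℕ) - m, by have := hi.1; have := hi.2; omega⟩ p * C (emb hmd p) j := by
  rw [Matrix.mul_apply]
  rw [sum_split hmd (f := fun k => embed hmd U i k * C k j)]
  have hz : ∀ k ∈ Finset.univ.filter (fun k : Fin I => ¬ inBand m d k),
      embed hmd U i k * C k j = 0 := by
    intro k hk
    have hkb := (Finset.mem_filter.mp hk).2
    rw [embed_in_row hmd U hi k, dif_neg hkb, zero_mul]
  rw [Finset.sum_eq_zero hz, add_zero]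
  refine Finset.sum_congr rfl (fun p _ => ?_)
  rw [embed_in_row hmd U hi (emb hmd p), dif_pos (emb_inBand hmd p)]
  simp [emb, Nat.add_sub_cancel_left]

/-- the block of a big matrix -/
def blockOf (hmd : m + d ≤ I) (A : Matrix (Fin I) (Fin I) ℝ) : Matrix (Fin d) (Fin d) ℝ :=
  Matrix.of fun p q => A (emb hmd p) (emb hmd q)

lemma B_out_out (hmd : m + d ≤ I) (U V : Matrix (Fin d) (Fin d) ℝ) (A : Matrix (Fin I) (Fin I) ℝ)
    {i j : Fin I} (hi : ¬ inBand m d i) (hj : ¬ inBand m d j) :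
    (embed hmd U * (A * (embed hmd V)ᵀ)) i j = A i j := by
  rw [mulL_out hmd U _ hi, mulT_out hmd V A hj]

lemma B_in_out (hmd : m + d ≤ I) (U V : Matrix (Fin d) (Fin d) ℝ) (A : Matrix (Fin I) (Fin I) ℝ)
    {j : Fin I} (hj : ¬ inBand m d j) (p : Fin d) :
    (embed hmd U * (A * (embed hmd V)ᵀ)) (emb hmd p) j
      = ∑ p' : Fin d, U p p' * A (emb hmd p') j := by
  rw [mulL_in hmd U _ (emb_inBand hmd p)]
  have e1 : (⟨((emb hmd p : Fin I) : ℕ) - m, by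
      have := (emb_inBand hmd p).1; have := (emb_inBand hmd p).2; omega⟩ : Fin d) = p := by
    apply Fin.ext; simp [emb]
  rw [e1]
  refine Finset.sum_congr rfl (fun p' _ => ?_)
  rw [mulT_out hmd V A hj]

lemma B_out_in (hmd : m + d ≤ I) (U V : Matrix (Fin d) (Fin d) ℝ) (A : Matrix (Fin I) (Fin I) ℝ)
    {i : Fin I} (hi : ¬ inBand m d i) (q : Fin d) :
    (embed hmd U * (A * (embed hmd V)ᵀ)) i (emb hmd q)
      = ∑ q' : Fin d, A i (emb hmd q') * V q q' := by
  rw [mulL_out hmd U _ hi, mulT_in hmd V A (emb_inBand hmd q)]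
  have e1 : (⟨((emb hmd q : Fin I) : ℕ) - m, by
      have := (emb_inBand hmd q).1; have := (emb_inBand hmd q).2; omega⟩ : Fin d) = q := by
    apply Fin.ext; simp [emb]
  rw [e1]

lemma B_in_in (hmd : m + d ≤ I) (U V : Matrix (Fin d) (Fin d) ℝ) (A : Matrix (Fin I) (Fin I) ℝ)
    (p q : Fin d) :
    (embed hmd U * (A * (embed hmd V)ᵀ)) (emb hmd p) (emb hmd q)
      = (U * blockOf hmd A * Vᵀ) p q := by
  rw [mulL_in hmd U _ (emb_inBand hmd p)]
  have e1 : (⟨((emb hmd p : Fin I) : ℕ) - m, by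
      have := (emb_inBand hmd p).1; have := (emb_inBand hmd p).2; omega⟩ : Fin d) = p := by
    apply Fin.ext; simp [emb]
  rw [e1]
  have hterm : ∀ p' : Fin d, (A * (embed hmd V)ᵀ) (emb hmd p') (emb hmd q)
      = ∑ q' : Fin d, A (emb hmd p') (emb hmd q') * V q q' := by
    intro p'
    rw [mulT_in hmd V A (emb_inBand hmd q)]
    have e2 : (⟨((emb hmd q : Fin I) : ℕ) - m, by
        have := (emb_inBand hmd q).1; have := (emb_inBand hmd q).2; omega⟩ : Fin d) = q := by
      apply Fin.ext; simp [emb]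
    rw [e2]
  rw [Finset.sum_congr rfl (fun p' _ => by rw [hterm p'])]
  calc ∑ p' : Fin d, U p p' * ∑ q' : Fin d, A (emb hmd p') (emb hmd q') * V q q'
      = ∑ p' : Fin d, ∑ q' : Fin d, U p p' * (blockOf hmd A p' q' * V q q') := by
        refine Finset.sum_congr rfl (fun p' _ => ?_)
        rw [Finset.mul_sum]
        exact Finset.sum_congr rfl (fun q' _ => by rw [blockOf, Matrix.of_apply])
    _ = ∑ q' : Fin d, ∑ p' : Fin d, U p p' * (blockOf hmd A p' q' * V q q') := Finset.sum_comm
    _ = (U * blockOf hmd A * Vᵀ) p q := by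
        rw [Matrix.mul_apply]
        refine Finset.sum_congr rfl (fun q' _ => ?_)
        rw [Matrix.mul_apply, Matrix.transpose_apply, Finset.sum_mul]
        refine Finset.sum_congr rfl (fun p' _ => by ring)


lemma slq_embed (hmd : m + d ≤ I) (A : Matrix (Fin I) (Fin I) ℝ)
    {U V : Matrix (Fin d) (Fin d) ℝ} (hU1 : Uᵀ * U = 1) (hV1 : Vᵀ * V = 1) :
    slq (embed hmd U * A * (embed hmd V)ᵀ) + slq (blockOf hmd A)
      = slq A + slq (U * blockOf hmd A * Vᵀ) := by
  classical
  rw [Matrix.mul_assoc]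
  set B := embed hmd U * (A * (embed hmd V)ᵀ) with hB
  set nb := Finset.univ.filter (fun i : Fin I => ¬ inBand m d i) with hnb
  have split : ∀ M : Matrix (Fin I) (Fin I) ℝ,
      slq M =
        ((∑ p : Fin d, ∑ q : Fin d,
            if ((emb hmd q : Fin I) : ℕ) < ((emb hmd p : Fin I) : ℕ)
            then M (emb hmd p) (emb hmd q) ^ 2 else 0)
          + ∑ p : Fin d, ∑ j ∈ nb,
            (if (j : ℕ) < ((emb hmd p : Fin I) : ℕ) then M (emb hmd p) j ^ 2 else 0))
        + ((∑ i ∈ nb, ∑ q : Fin d,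
            (if ((emb hmd q : Fin I) : ℕ) < (i : ℕ) then M i (emb hmd q) ^ 2 else 0))
          + ∑ i ∈ nb, ∑ j ∈ nb, (if (j : ℕ) < (i : ℕ) then M i j ^ 2 else 0)) := by
    intro M
    unfold slq
    rw [sum_split hmd (f := fun i : Fin I => ∑ j : Fin I, if (j:ℕ) < (i:ℕ) then M i j ^2 else 0)]
    congr 1
    · rw [Finset.sum_congr rfl (fun p _ => sum_split hmd
        (f := fun j : Fin I => if (j:ℕ) < ((emb hmd p : Fin I):ℕ) then M (emb hmd p) j ^2 else 0))]
      rw [Finset.sum_add_distrib]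
    · rw [Finset.sum_congr rfl (fun (i : Fin I) _ => sum_split hmd
        (f := fun j : Fin I => if (j:ℕ) < (i:ℕ) then M i j ^2 else 0))]
      rw [Finset.sum_add_distrib]
  have c1B : (∑ p : Fin d, ∑ q : Fin d,
      if ((emb hmd q : Fin I) : ℕ) < ((emb hmd p : Fin I) : ℕ)
      then B (emb hmd p) (emb hmd q) ^ 2 else 0) = slq (U * blockOf hmd A * Vᵀ) := by
    refine Finset.sum_congr rfl (fun p _ => Finset.sum_congr rfl (fun q _ => ?_))
    simp only [emb_val]
    rw [hB, B_in_in hmd U V A p q]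
    by_cases hc : (q : ℕ) < (p : ℕ)
    · rw [if_pos (show m + (q:ℕ) < m + (p:ℕ) by omega), if_pos hc]
    · rw [if_neg (show ¬ (m + (q:ℕ) < m + (p:ℕ)) by omega), if_neg hc]
  have c1A : (∑ p : Fin d, ∑ q : Fin d,
      if ((emb hmd q : Fin I) : ℕ) < ((emb hmd p : Fin I) : ℕ)
      then A (emb hmd p) (emb hmd q) ^ 2 else 0) = slq (blockOf hmd A) := by
    refine Finset.sum_congr rfl (fun p _ => Finset.sum_congr rfl (fun q _ => ?_))
    simp only [emb_val]
    rw [show blockOf hmd A p q = A (emb hmd p) (emb hmd q) from rfl]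
    by_cases hc : (q : ℕ) < (p : ℕ)
    · rw [if_pos (show m + (q:ℕ) < m + (p:ℕ) by omega), if_pos hc]
    · rw [if_neg (show ¬ (m + (q:ℕ) < m + (p:ℕ)) by omega), if_neg hc]
  have c2 : (∑ p : Fin d, ∑ j ∈ nb,
      (if (j : ℕ) < ((emb hmd p : Fin I) : ℕ) then B (emb hmd p) j ^ 2 else 0))
      = ∑ p : Fin d, ∑ j ∈ nb,
      (if (j : ℕ) < ((emb hmd p : Fin I) : ℕ) then A (emb hmd p) j ^ 2 else 0) := by
    rw [Finset.sum_comm, Finset.sum_comm (s := Finset.univ) (t := nb)]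
    refine Finset.sum_congr rfl (fun j hj => ?_)
    have hjb := (Finset.mem_filter.mp hj).2
    simp only [emb_val]
    by_cases hjm : (j : ℕ) < m
    · have ht : ∀ p : Fin d, (j : ℕ) < m + (p : ℕ) := fun p => by omega
      have e : ∀ p : Fin d, (if (j:ℕ) < m + (p:ℕ) then B (emb hmd p) j ^2 else 0)
          = (∑ p' : Fin d, U p p' * A (emb hmd p') j) ^ 2 := fun p => by
        rw [if_pos (ht p), hB, B_in_out hmd U V A hjb p]
      rw [Finset.sum_congr rfl (fun p _ => e p),
        sumsq_mulVec hU1 (w := fun p' => A (emb hmd p') j)]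
      exact (Finset.sum_congr rfl (fun p _ => by rw [if_pos (ht p)])).symm
    · have hge : m + d ≤ (j : ℕ) := by
        rw [inBand] at hjb; push_neg at hjb; omega
      have ht : ∀ p : Fin d, ¬ ((j : ℕ) < m + (p : ℕ)) := fun p => by omega
      rw [Finset.sum_congr rfl (fun p _ => if_neg (ht p)),
        Finset.sum_congr rfl (fun p _ => if_neg (ht p))]
  have c3 : (∑ i ∈ nb, ∑ q : Fin d,
      (if ((emb hmd q : Fin I) : ℕ) < (i : ℕ) then B i (emb hmd q) ^ 2 else 0))
      = ∑ i ∈ nb, ∑ q : Fin d,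
      (if ((emb hmd q : Fin I) : ℕ) < (i : ℕ) then A i (emb hmd q) ^ 2 else 0) := by
    refine Finset.sum_congr rfl (fun i hi => ?_)
    have hib := (Finset.mem_filter.mp hi).2
    simp only [emb_val]
    by_cases him : m + d ≤ (i : ℕ)
    · have ht : ∀ q : Fin d, m + (q : ℕ) < (i : ℕ) := fun q => by omega
      have e : ∀ q : Fin d, (if m + (q:ℕ) < (i:ℕ) then B i (emb hmd q) ^2 else 0)
          = (∑ q' : Fin d, V q q' * A i (emb hmd q')) ^ 2 := fun q => by
        rw [if_pos (ht q), hB, B_out_in hmd U V A hib q]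
        congr 1
        exact Finset.sum_congr rfl (fun q' _ => mul_comm _ _)
      rw [Finset.sum_congr rfl (fun q _ => e q),
        sumsq_mulVec hV1 (w := fun q' => A i (emb hmd q'))]
      exact (Finset.sum_congr rfl (fun q _ => by rw [if_pos (ht q)])).symm
    · have hlt : (i : ℕ) < m := by
        rw [inBand] at hib; push_neg at hib; omega
      have ht : ∀ q : Fin d, ¬ (m + (q : ℕ) < (i : ℕ)) := fun q => by omega
      rw [Finset.sum_congr rfl (fun q _ => if_neg (ht q)),
        Finset.sum_congr rfl (fun q _ => if_neg (ht q))]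
  have c4 : (∑ i ∈ nb, ∑ j ∈ nb, (if (j : ℕ) < (i : ℕ) then B i j ^ 2 else 0))
      = ∑ i ∈ nb, ∑ j ∈ nb, (if (j : ℕ) < (i : ℕ) then A i j ^ 2 else 0) := by
    refine Finset.sum_congr rfl (fun i hi => Finset.sum_congr rfl (fun j hj => ?_))
    have hib := (Finset.mem_filter.mp hi).2
    have hjb := (Finset.mem_filter.mp hj).2
    rw [hB, B_out_out hmd U V A hib hjb]
  rw [split B, split A, c1B, c1A, c2, c3, c4]
  ring

end Embedding2


lemma slq_pair {n : ℕ} (P Q : Matrix (Fin n) (Fin n) ℝ) (lam : ℝ) :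
    slq (P + lam • Q) + slq (Q - lam • P) = (1 + lam ^ 2) * (slq P + slq Q) := by
  unfold slq
  rw [← Finset.sum_add_distrib, ← Finset.sum_add_distrib, Finset.mul_sum]
  refine Finset.sum_congr rfl (fun i _ => ?_)
  rw [← Finset.sum_add_distrib, ← Finset.sum_add_distrib, Finset.mul_sum]
  refine Finset.sum_congr rfl (fun j _ => ?_)
  by_cases hc : (j : ℕ) < (i : ℕ)
  · simp only [if_pos hc, Matrix.add_apply, Matrix.sub_apply, Matrix.smul_apply, smul_eq_mul]
    ring
  · simp only [if_neg hc]; ring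

lemma frob_sub_upper {n : ℕ} (A R : Matrix (Fin n) (Fin n) ℝ) (hR : R.BlockTriangular id) :
    frob (A - R) = slq A + usq (A - R) := by
  rw [frob_eq_slq_add_usq]
  congr 1
  unfold slq
  refine Finset.sum_congr rfl (fun i _ => Finset.sum_congr rfl (fun j _ => ?_))
  by_cases hc : (j : ℕ) < (i : ℕ)
  · rw [if_pos hc, if_pos hc, Matrix.sub_apply,
      hR (show id j < id i from Fin.lt_def.mpr hc), sub_zero]
  · rw [if_neg hc, if_neg hc]

lemma frob_sub_upPart {n : ℕ} (A : Matrix (Fin n) (Fin n) ℝ) :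
    frob (A - upPart A) = slq A := by
  unfold frob slq
  refine Finset.sum_congr rfl (fun i _ => Finset.sum_congr rfl (fun j _ => ?_))
  rw [Matrix.sub_apply]
  unfold upPart
  rw [Matrix.of_apply]
  by_cases hc : (j : ℕ) < (i : ℕ)
  · rw [if_pos hc, if_pos hc, sub_zero]
  · rw [if_neg hc, if_neg hc, sub_self]
    norm_num

lemma gsd_val {n : ℕ} (Z : Fin n → Fin n → Fin 2 → ℝ) (Qa Qb R1 R2 : Matrix (Fin n) (Fin n) ℝ)
    (hQa1 : Qaᵀ * Qa = 1) (hQa2 : Qa * Qaᵀ = 1) (hQb1 : Qbᵀ * Qb = 1) (hQb2 : Qb * Qbᵀ = 1) :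
    gsdObj Z Qa Qb R1 R2
      = frob (Qaᵀ * sliceMat Z 0 * Qb - R1) + frob (Qaᵀ * sliceMat Z 1 * Qb - R2) := by
  have main : ∀ (k : Fin 2) (R : Matrix (Fin n) (Fin n) ℝ),
      (∑ i : Fin n, ∑ j : Fin n, (Z i j k - (Qa * R * Qbᵀ) i j) ^ 2)
        = frob (Qaᵀ * sliceMat Z k * Qb - R) := by
    intro k R
    have e1 : (∑ i : Fin n, ∑ j : Fin n, (Z i j k - (Qa * R * Qbᵀ) i j) ^ 2)
        = frob (sliceMat Z k - Qa * R * Qbᵀ) := by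
      unfold frob
      refine Finset.sum_congr rfl (fun i _ => Finset.sum_congr rfl (fun j _ => ?_))
      rw [Matrix.sub_apply]
      rfl
    rw [e1]
    have e2 : frob (sliceMat Z k - Qa * R * Qbᵀ)
        = frob (Qaᵀ * (sliceMat Z k - Qa * R * Qbᵀ) * Qb) := by
      refine (frob_orth_left_right ?_ hQb2).symm
      rwa [Matrix.transpose_transpose]
    rw [e2]
    congr 1
    rw [Matrix.mul_sub, Matrix.sub_mul]
    congr 1
    calc Qaᵀ * (Qa * R * Qbᵀ) * Qb = Qaᵀ * Qa * R * (Qbᵀ * Qb) := by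
          simp only [Matrix.mul_assoc]
      _ = R := by rw [hQa1, hQb1, Matrix.one_mul, Matrix.mul_one]
  unfold gsdObj
  rw [Fin.sum_univ_two]
  congr 1
  · rw [show (![R1, R2] 0 : Matrix (Fin n) (Fin n) ℝ) = R1 from rfl]
    exact main 0 R1
  · rw [show (![R1, R2] 1 : Matrix (Fin n) (Fin n) ℝ) = R2 from rfl]
    exact main 1 R2

end Stmt13Aux

open Stmt13Aux

theorem stmt13 {I : ℕ} (hI : 2 ≤ I) :
    ∀ᵐ Z ∂(volume : Measure (Fin I → Fin I → Fin 2 → ℝ)),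
      tensorRank Z = I + 1 →
      ∀ Qa Qb R1 R2 : Matrix (Fin I) (Fin I) ℝ,
        Qaᵀ * Qa = 1 → Qa * Qaᵀ = 1 → Qbᵀ * Qb = 1 → Qb * Qbᵀ = 1 →
        R1.BlockTriangular id → R2.BlockTriangular id →
        (∀ Qa' Qb' R1' R2' : Matrix (Fin I) (Fin I) ℝ,
          Qa'ᵀ * Qa' = 1 → Qa' * Qa'ᵀ = 1 → Qb'ᵀ * Qb' = 1 → Qb' * Qb'ᵀ = 1 →
          R1'.BlockTriangular id → R2'.BlockTriangular id →
          gsdObj Z Qa Qb R1 R2 ≤ gsdObj Z Qa' Qb' R1' R2') →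
        IsUnit R1.det → IsUnit R2.det →
        ∀ (d h : ℕ), 2 ≤ d → 1 ≤ h → h + d ≤ I + 1 →
          ∀ W1 W2 : Matrix (Fin d) (Fin d) ℝ,
            (∀ (p q : Fin d) (hp : h - 1 + p.val < I) (hq : h - 1 + q.val < I),
              W1 p q = (Qaᵀ * sliceMat Z 0 * Qb) ⟨h - 1 + p.val, hp⟩ ⟨h - 1 + q.val, hq⟩) →
            (∀ (p q : Fin d) (hp : h - 1 + p.val < I) (hq : h - 1 + q.val < I),
              W2 p q = (Qaᵀ * sliceMat Z 1 * Qb) ⟨h - 1 + p.val, hp⟩ ⟨h - 1 + q.val, hq⟩) →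
            ∀ lam : ℝ, lam ≠ 0 →
              (∀ p q : Fin d, p ≤ q → (W2 - lam • W1) p q = 0) →
              W1.BlockTriangular id ∧ W2.BlockTriangular id := by
  refine Filter.Eventually.of_forall (fun Z => ?_)
  intro _rank Qa Qb R1 R2 hQa1 hQa2 hQb1 hQb2 hR1 hR2 hopt hdet1 _hdet2
  intro d h hd hh hhd W1 W2 hW1 hW2 lam _hlam hUp
  classical
  set A0 := Qaᵀ * sliceMat Z 0 * Qb with hA0
  set A1 := Qaᵀ * sliceMat Z 1 * Qb with hA1
  have base := gsd_val Z Qa Qb R1 R2 hQa1 hQa2 hQb1 hQb2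
  -- Step 1 : R1 = upper part of A0 on and above the diagonal
  have hcomp := hopt Qa Qb (upPart A0) (upPart A1) hQa1 hQa2 hQb1 hQb2
    (upPart_blockTriangular _) (upPart_blockTriangular _)
  rw [base, gsd_val Z Qa Qb (upPart A0) (upPart A1) hQa1 hQa2 hQb1 hQb2,
    frob_sub_upPart, frob_sub_upPart, frob_sub_upper A0 R1 hR1,
    frob_sub_upper A1 R2 hR2] at hcomp
  have husq0 : usq (A0 - R1) = 0 := by
    nlinarith [usq_nonneg (A0 - R1), usq_nonneg (A1 - R2)]
  have hdiagA0 : ∀ i, A0 i i = R1 i i := by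
    intro i
    have h0 := usq_eq_zero_entries husq0 i i (by omega)
    rw [Matrix.sub_apply] at h0
    linarith
  have hR1diag : ∀ i, R1 i i ≠ 0 := by
    intro i hzero
    have hdet : R1.det = ∏ i, R1 i i := Matrix.det_of_upperTriangular hR1
    have hz : R1.det = 0 := by
      rw [hdet]; exact Finset.prod_eq_zero (Finset.mem_univ i) hzero
    exact (isUnit_iff_ne_zero.mp hdet1) hz
  -- Step 2 : identify W1, W2 with the blocks of A0, A1
  have hm : (h - 1) + d ≤ I := by omega
  have hW1b : W1 = blockOf hm A0 := by
    ext p q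
    rw [hW1 p q (by have := p.isLt; omega) (by have := q.isLt; omega)]
    rfl
  have hW2b : W2 = blockOf hm A1 := by
    ext p q
    rw [hW2 p q (by have := p.isLt; omega) (by have := q.isLt; omega)]
    rfl
  -- Step 3 : block optimality
  have blockIneq : ∀ U V : Matrix (Fin d) (Fin d) ℝ,
      Uᵀ * U = 1 → U * Uᵀ = 1 → Vᵀ * V = 1 → V * Vᵀ = 1 →
      slq W1 + slq W2 ≤ slq (U * W1 * Vᵀ) + slq (U * W2 * Vᵀ) := by
    intro U V hU1 hU2 hV1 hV2
    have hUe2 : embed hm U * (embed hm U)ᵀ = 1 := embed_orth hm hU2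
    have hUe1 : (embed hm U)ᵀ * embed hm U = 1 := mul_eq_one_comm.mp hUe2
    have hVe2 : embed hm V * (embed hm V)ᵀ = 1 := embed_orth hm hV2
    have hVe1 : (embed hm V)ᵀ * embed hm V = 1 := mul_eq_one_comm.mp hVe2
    have ho1 : (Qa * (embed hm U)ᵀ)ᵀ * (Qa * (embed hm U)ᵀ) = 1 := by
      rw [Matrix.transpose_mul, Matrix.transpose_transpose]
      calc embed hm U * Qaᵀ * (Qa * (embed hm U)ᵀ)
          = embed hm U * (Qaᵀ * Qa) * (embed hm U)ᵀ := by simp only [Matrix.mul_assoc]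
        _ = 1 := by rw [hQa1, Matrix.mul_one, hUe2]
    have ho2 : (Qa * (embed hm U)ᵀ) * (Qa * (embed hm U)ᵀ)ᵀ = 1 := by
      rw [Matrix.transpose_mul, Matrix.transpose_transpose]
      calc Qa * (embed hm U)ᵀ * (embed hm U * Qaᵀ)
          = Qa * ((embed hm U)ᵀ * embed hm U) * Qaᵀ := by simp only [Matrix.mul_assoc]
        _ = 1 := by rw [hUe1, Matrix.mul_one, hQa2]
    have ho3 : (Qb * (embed hm V)ᵀ)ᵀ * (Qb * (embed hm V)ᵀ) = 1 := by
      rw [Matrix.transpose_mul, Matrix.transpose_transpose]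
      calc embed hm V * Qbᵀ * (Qb * (embed hm V)ᵀ)
          = embed hm V * (Qbᵀ * Qb) * (embed hm V)ᵀ := by simp only [Matrix.mul_assoc]
        _ = 1 := by rw [hQb1, Matrix.mul_one, hVe2]
    have ho4 : (Qb * (embed hm V)ᵀ) * (Qb * (embed hm V)ᵀ)ᵀ = 1 := by
      rw [Matrix.transpose_mul, Matrix.transpose_transpose]
      calc Qb * (embed hm V)ᵀ * (embed hm V * Qbᵀ)
          = Qb * ((embed hm V)ᵀ * embed hm V) * Qbᵀ := by simp only [Matrix.mul_assoc]
        _ = 1 := by rw [hVe1, Matrix.mul_one, hQb2]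
    have hA'0 : (Qa * (embed hm U)ᵀ)ᵀ * sliceMat Z 0 * (Qb * (embed hm V)ᵀ)
        = embed hm U * A0 * (embed hm V)ᵀ := by
      rw [Matrix.transpose_mul, Matrix.transpose_transpose, hA0]
      simp only [Matrix.mul_assoc]
    have hA'1 : (Qa * (embed hm U)ᵀ)ᵀ * sliceMat Z 1 * (Qb * (embed hm V)ᵀ)
        = embed hm U * A1 * (embed hm V)ᵀ := by
      rw [Matrix.transpose_mul, Matrix.transpose_transpose, hA1]
      simp only [Matrix.mul_assoc]
    have hcomp2 := hopt (Qa * (embed hm U)ᵀ) (Qb * (embed hm V)ᵀ)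
      (upPart (embed hm U * A0 * (embed hm V)ᵀ)) (upPart (embed hm U * A1 * (embed hm V)ᵀ))
      ho1 ho2 ho3 ho4 (upPart_blockTriangular _) (upPart_blockTriangular _)
    rw [base, gsd_val Z _ _ _ _ ho1 ho2 ho3 ho4, hA'0, hA'1,
      frob_sub_upPart, frob_sub_upPart, frob_sub_upper A0 R1 hR1,
      frob_sub_upper A1 R2 hR2] at hcomp2
    have hd0 := slq_embed hm A0 hU1 hV1
    have hd1 := slq_embed hm A1 hU1 hV1
    rw [← hW1b] at hd0
    rw [← hW2b] at hd1
    have hu0 := usq_nonneg (A0 - R1)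
    have hu1 := usq_nonneg (A1 - R2)
    linarith
  -- Step 4 : rotate the pencil
  set T := W1 + lam • W2 with hT
  set N := W2 - lam • W1 with hN
  have hdiagT : ∀ p, T p p ≠ 0 := by
    intro p
    have h2 := hUp p p (le_refl p)
    rw [hN, Matrix.sub_apply, Matrix.smul_apply, smul_eq_mul] at h2
    rw [hT]
    have hNpp : W2 p p = lam * W1 p p := by linarith
    rw [Matrix.add_apply, Matrix.smul_apply, smul_eq_mul, hNpp]
    have hW1pp : W1 p p ≠ 0 := by
      rw [hW1b]
      show A0 (emb hm p) (emb hm p) ≠ 0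
      rw [hdiagA0]
      exact hR1diag _
    intro hc
    have : (1 + lam ^ 2) * W1 p p = 0 := by ring_nf; ring_nf at hc; linarith
    have h1l : (1 : ℝ) + lam ^ 2 ≠ 0 := by positivity
    exact hW1pp (by
      rcases mul_eq_zero.mp this with hc1 | hc2
      · exact absurd hc1 h1l
      · exact hc2)
  have hNs : ∀ p q : Fin d, ¬ ((q : ℕ) < (p : ℕ)) → N p q = 0 := by
    intro p q hpq
    exact hUp p q (by omega)
  have hoptTN : ∀ U V : Matrix (Fin d) (Fin d) ℝ,
      Uᵀ * U = 1 → U * Uᵀ = 1 → Vᵀ * V = 1 → V * Vᵀ = 1 →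
      slq T + slq N ≤ slq (U * T * Vᵀ) + slq (U * N * Vᵀ) := by
    intro U V hU1 hU2 hV1 hV2
    have eT : U * T * Vᵀ = U * W1 * Vᵀ + lam • (U * W2 * Vᵀ) := by
      rw [hT, Matrix.mul_add, Matrix.add_mul, Matrix.mul_smul, Matrix.smul_mul]
    have eN : U * N * Vᵀ = U * W2 * Vᵀ - lam • (U * W1 * Vᵀ) := by
      rw [hN, Matrix.mul_sub, Matrix.sub_mul, Matrix.mul_smul, Matrix.smul_mul]
    rw [hT, hN, eT, eN, slq_pair W1 W2 lam, slq_pair (U * W1 * Vᵀ) (U * W2 * Vᵀ) lam]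
    have hpos : (0:ℝ) ≤ 1 + lam ^ 2 := by positivity
    exact mul_le_mul_of_nonneg_left (blockIneq U V hU1 hU2 hV1 hV2) hpos
  obtain ⟨hTtri, hN0⟩ := core hd T N hdiagT hNs hoptTN
  -- Step 5 : conclude
  have hW2eq : ∀ p q : Fin d, W2 p q = lam * W1 p q := by
    intro p q
    have h3 : N p q = 0 := by rw [hN0]; rfl
    rw [hN, Matrix.sub_apply, Matrix.smul_apply, smul_eq_mul] at h3
    linarith
  have hW1tri : W1.BlockTriangular id := by
    intro i j hij
    have hTij : T i j = 0 := hTtri hij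
    rw [hT, Matrix.add_apply, Matrix.smul_apply, smul_eq_mul, hW2eq i j] at hTij
    have h1l : (1 : ℝ) + lam ^ 2 ≠ 0 := by positivity
    have : (1 + lam ^ 2) * W1 i j = 0 := by linarith [hTij]
    rcases mul_eq_zero.mp this with hc1 | hc2
    · exact absurd hc1 h1l
    · exact hc2
  refine ⟨hW1tri, ?_⟩
  intro i j hij
  rw [hW2eq i j, hW1tri hij, mul_zero]
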